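/- Let n, m ≥ 1, let f : ℤ/nℤ → ℤ/mℤ be congruence preserving, and let a_0, …, a_{n−1} ∈ ℤ/mℤ be its coefficients in the expansion f(x) = Σ_{k=0}^{n−1} a_k · C(x, k). Then for all k < n and every p with 1 ≤ p ≤ k, the element p (viewed in ℤ/mℤ) divides a_k in ℤ/mℤ. -/

import Mathlib

/-- `ulcm k` is the least common multiple of `1, 2, …, k`, with `ulcm 0 = 1`. -/
def ulcm (k : ℕ) : ℕ := (Finset.Icc 1 k).lcm id

/-- `mu m` is the largest prime power dividing `m`. -/
def mu (m : ℕ) : ℕ := m.primeFactors.sup fun p => p ^ m.factorization p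

/-- `f : ZMod n → ZMod m` is congruence preserving. -/
def CongPres (n m : ℕ) (f : ZMod n → ZMod m) : Prop :=
  ∀ d : ℕ, ∀ hd : d ∣ m, ∀ a b : ℕ, a < n → b < n → a ≡ b [MOD d] →
    ZMod.castHom hd (ZMod d) (f a) = ZMod.castHom hd (ZMod d) (f b)

/-- `CP n m` is the number of congruence preserving functions `ZMod n → ZMod m`. -/
noncomputable def CP (n m : ℕ) : ℕ := Nat.card {f : ZMod n → ZMod m // CongPres n m f}

open Finset Function fwdDiff

namespace Stmt8Aux

lemma fwdDiff_iter_comp_hom {G H : Type*} [AddCommGroup G] [AddCommGroup H]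
    (φ : G →+ H) (g : ℕ → G) (k j : ℕ) :
    (fwdDiff 1)^[k] (fun i => φ (g i)) j = φ ((fwdDiff 1)^[k] g j) := by
  induction k generalizing g j with
  | zero => simp
  | succ k ih =>
    rw [Function.iterate_succ_apply, Function.iterate_succ_apply]
    have h1 : fwdDiff 1 (fun i => φ (g i)) = fun i => φ (fwdDiff 1 g i) := by
      funext i; simp [fwdDiff, map_sub]
    rw [h1, ih]

lemma fwdDiff_iter_congr {G : Type*} [AddCommGroup G] (g h : ℕ → G) (k j : ℕ)
    (hgh : ∀ i, i ≤ j + k → g i = h i) : (fwdDiff 1)^[k] g j = (fwdDiff 1)^[k] h j := by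
  rw [fwdDiff_iter_eq_sum_shift, fwdDiff_iter_eq_sum_shift]
  refine Finset.sum_congr rfl fun i hi => ?_
  rw [Finset.mem_range] at hi
  simp only [smul_eq_mul, mul_one]
  rw [hgh (j + i) (by omega)]

lemma fwdDiff_periodic {g : ℕ → ℤ} {Q : ℕ} (hg : ∀ j, g (j + Q) = g j) (j : ℕ) :
    fwdDiff 1 g (j + Q) = fwdDiff 1 g j := by
  simp only [fwdDiff]
  rw [show j + Q + 1 = (j + 1) + Q by ring, hg, hg]

lemma fwdDiff_iter_periodic {g : ℕ → ℤ} {Q : ℕ} (hg : ∀ j, g (j + Q) = g j) (k j : ℕ) :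
    (fwdDiff 1)^[k] g (j + Q) = (fwdDiff 1)^[k] g j := by
  induction k generalizing g with
  | zero => simpa using hg j
  | succ k ih =>
    simp only [Function.iterate_succ_apply]
    exact ih (fun j' => fwdDiff_periodic hg j')

lemma q_dvd_fwdDiff_pow (q s : ℕ) (hq : q.Prime) (φ : ℕ → ℤ)
    (hφ : ∀ j, φ (j + q ^ (s + 1)) = φ j) (j : ℕ) :
    (q : ℤ) ∣ (fwdDiff 1)^[q ^ (s + 1)] φ j := by
  set Q := q ^ (s + 1) with hQdef
  have hQ1 : 1 < Q := Nat.one_lt_pow (by omega) hq.one_lt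
  rw [fwdDiff_iter_eq_sum_shift]
  have hset : range (Q + 1) = insert 0 (insert Q (Ioo 0 Q)) := by
    ext i; simp only [Finset.mem_range, Finset.mem_insert, Finset.mem_Ioo]; omega
  rw [hset, Finset.sum_insert (by simp only [Finset.mem_insert, Finset.mem_Ioo]; omega),
    Finset.sum_insert (by simp only [Finset.mem_Ioo]; omega)]
  have t0 : ((-1 : ℤ) ^ (Q - 0) * ((Q.choose 0 : ℕ) : ℤ)) • φ (j + 0 • 1) = (-1 : ℤ) ^ Q * φ j := by
    simp [smul_eq_mul]
  have tQ : ((-1 : ℤ) ^ (Q - Q) * ((Q.choose Q : ℕ) : ℤ)) • φ (j + Q • 1) = φ j := by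
    simp [smul_eq_mul, hφ j]
  rw [t0, tQ]
  have hre : (-1 : ℤ) ^ Q * φ j + (φ j + ∑ i ∈ Ioo 0 Q, ((-1 : ℤ) ^ (Q - i) * ((Q.choose i : ℕ) : ℤ)) • φ (j + i • 1))
      = ((-1 : ℤ) ^ Q + 1) * φ j + ∑ i ∈ Ioo 0 Q, ((-1 : ℤ) ^ (Q - i) * ((Q.choose i : ℕ) : ℤ)) • φ (j + i • 1) := by
    ring
  rw [hre]
  refine dvd_add (Dvd.dvd.mul_right ?_ _) (Finset.dvd_sum fun i hi => ?_)
  · rcases hq.eq_two_or_odd' with h2 | hodd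
    · subst h2
      have hev : Even Q := by
        rw [hQdef, pow_succ]
        exact Even.mul_left even_two _
      rw [hev.neg_one_pow]
      norm_num
    · have hoQ : Odd Q := hodd.pow
      rw [hoQ.neg_one_pow]
      simp
  · rw [Finset.mem_Ioo] at hi
    have hc : q ∣ Q.choose i := hq.dvd_choose_pow (by omega) (by omega)
    have hc' : (q : ℤ) ∣ ((Q.choose i : ℕ) : ℤ) := Int.natCast_dvd_natCast.mpr hc
    rw [smul_eq_mul]
    exact (hc'.mul_left _).mul_right _

lemma periodic_fwdDiff_pow (q s c : ℕ) (hq : q.Prime) (φ : ℕ → ℤ)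
    (hφ : ∀ j, φ (j + q ^ (s + 1)) = φ j) :
    ∃ ψ : ℕ → ℤ, (∀ j, ψ (j + q ^ (s + 1)) = ψ j) ∧
      (fwdDiff 1)^[q ^ (s + 1) * c] φ = fun j => (q : ℤ) ^ c * ψ j := by
  induction c with
  | zero => exact ⟨φ, hφ, by funext j; simp⟩
  | succ c ih =>
    obtain ⟨ψ, hψper, hψ⟩ := ih
    have hdvd : ∀ j, (q : ℤ) ∣ (fwdDiff 1)^[q ^ (s + 1)] ψ j := q_dvd_fwdDiff_pow q s hq ψ hψper
    refine ⟨fun j => (fwdDiff 1)^[q ^ (s + 1)] ψ j / q, fun j => ?_, ?_⟩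
    · exact congrArg (fun x : ℤ => x / (q : ℤ)) (fwdDiff_iter_periodic hψper _ j)
    · funext j
      rw [show q ^ (s + 1) * (c + 1) = q ^ (s + 1) + q ^ (s + 1) * c by ring,
        Function.iterate_add_apply, hψ]
      have h1 : (fun j => (q : ℤ) ^ c * ψ j) = ((q : ℤ) ^ c) • ψ := by
        funext j'; simp
      rw [h1, fwdDiff_iter_const_smul, Pi.smul_apply, smul_eq_mul]
      show (q : ℤ) ^ c * (fwdDiff 1)^[q ^ (s + 1)] ψ j
          = (q : ℤ) ^ (c + 1) * ((fwdDiff 1)^[q ^ (s + 1)] ψ j / q)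
      have h2 := Int.mul_ediv_cancel' (hdvd j)
      calc (q : ℤ) ^ c * (fwdDiff 1)^[q ^ (s + 1)] ψ j
          = (q : ℤ) ^ c * ((q : ℤ) * ((fwdDiff 1)^[q ^ (s + 1)] ψ j / q)) := by rw [h2]
        _ = (q : ℤ) ^ (c + 1) * ((fwdDiff 1)^[q ^ (s + 1)] ψ j / q) := by ring

lemma core (q : ℕ) (hq : q.Prime) :
    ∀ c s k : ℕ, q ^ (s + c) ≤ k →
      ∀ F : ℕ → ℤ, (∀ t, t ≤ c → ∀ i j : ℕ, i ≡ j [MOD q ^ (s + t)] → (q : ℤ) ^ t ∣ F i - F j) →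
      (q : ℤ) ^ c ∣ (fwdDiff 1)^[k] F 0 := by
  intro c
  induction c with
  | zero => intro s k hk F hF; simp
  | succ c ih =>
    intro s k hk F hF
    have hq0 : (q : ℤ) ≠ 0 := by exact_mod_cast hq.pos.ne'
    set Q := q ^ (s + 1) with hQ
    have hQpos : 0 < Q := pow_pos hq.pos _
    set φ : ℕ → ℤ := fun j => F (j % Q) with hφ
    have hper : ∀ j, φ (j + Q) = φ j := fun j => by simp only [hφ, Nat.add_mod_right]
    have hdvd1 : ∀ j, (q : ℤ) ∣ F j - φ j := by
      intro j
      have h := hF 1 (by omega) j (j % Q) ((Nat.mod_modEq j Q).symm)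
      simpa using h
    set G : ℕ → ℤ := fun j => (F j - φ j) / q with hG
    have hFG : ∀ j, F j = φ j + q * G j := by
      intro j
      have h := Int.ediv_mul_cancel (hdvd1 j)
      simp only [hG]
      linarith [h]
    have hcc : c + 1 ≤ q ^ c := le_trans (Nat.lt_two_pow_self (n := c)) (Nat.pow_le_pow_left hq.two_le c)
    have hkA : Q * (c + 1) ≤ k := by
      calc Q * (c + 1) ≤ Q * q ^ c := Nat.mul_le_mul_left _ hcc
        _ = q ^ (s + 1 + c) := by rw [hQ, ← pow_add]
        _ ≤ k := by rw [show s + 1 + c = s + (c + 1) by omega]; exact hk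
    obtain ⟨ψ, hψper, hψ⟩ := periodic_fwdDiff_pow q s (c + 1) hq φ hper
    have hA : (q : ℤ) ^ (c + 1) ∣ (fwdDiff 1)^[k] φ 0 := by
      rw [show k = (k - Q * (c + 1)) + Q * (c + 1) by omega, Function.iterate_add_apply, hψ]
      have h1 : (fun j => (q : ℤ) ^ (c + 1) * ψ j) = ((q : ℤ) ^ (c + 1)) • ψ := by
        funext j'; simp
      rw [h1, fwdDiff_iter_const_smul, Pi.smul_apply, smul_eq_mul]
      exact Dvd.intro _ rfl
    have hB : (q : ℤ) ^ c ∣ (fwdDiff 1)^[k] G 0 := by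
      apply ih (s + 1) k (by rw [show s + 1 + c = s + (c + 1) by omega]; exact hk) G
      intro t ht i j hij
      have hQQ : i % Q = j % Q :=
        Nat.ModEq.of_dvd (pow_dvd_pow q (by omega : s + 1 ≤ s + 1 + t)) hij
      have hphi : φ i = φ j := by simp only [hφ, hQQ]
      have h2 := hF (t + 1) (by omega) i j (by rw [show s + (t + 1) = s + 1 + t by omega]; exact hij)
      have key : (q : ℤ) * (G i - G j) = F i - F j := by
        have e1 := hFG i; have e2 := hFG j
        rw [e1, e2, hphi]; ring
      rw [pow_succ] at h2
      obtain ⟨u, hu⟩ := h2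
      refine ⟨u, ?_⟩
      apply mul_left_cancel₀ hq0
      rw [key, hu]; ring
    have hsplitF : (fwdDiff 1)^[k] F 0 = (fwdDiff 1)^[k] φ 0 + (q : ℤ) * (fwdDiff 1)^[k] G 0 := by
      have h1 : F = φ + (q : ℤ) • G := by
        funext j; simp [hFG j]
      rw [h1, fwdDiff_iter_add, Pi.add_apply, fwdDiff_iter_const_smul, Pi.smul_apply, smul_eq_mul]
    rw [hsplitF]
    exact dvd_add hA (by rw [pow_succ']; exact mul_dvd_mul_left _ hB)

lemma extract (m n0 : ℕ) (a : Fin n0 → ZMod m) (k : Fin n0) :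
    (fwdDiff 1)^[(k : ℕ)] (fun j : ℕ => ∑ l : Fin n0, a l * ((j.choose l : ℕ) : ZMod m)) 0 = a k := by
  have hsum : (fun j : ℕ => ∑ l : Fin n0, a l * ((j.choose l : ℕ) : ZMod m))
      = ∑ l : Fin n0, (a l) • (fun j : ℕ => (((j.choose l : ℕ) : ℤ) : ZMod m)) := by
    funext j
    simp [smul_eq_mul]
  rw [hsum, fwdDiff_iter_finset_sum, Finset.sum_apply]
  have hterm : ∀ l : Fin n0,
      (fwdDiff 1)^[(k : ℕ)] ((a l) • fun j : ℕ => (((j.choose l : ℕ) : ℤ) : ZMod m)) 0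
        = a l * (if (k : ℕ) = (l : ℕ) then 1 else 0) := by
    intro l
    rw [fwdDiff_iter_const_smul, Pi.smul_apply, smul_eq_mul]
    have h1 : (fwdDiff 1)^[(k : ℕ)] (fun j : ℕ => (((j.choose l : ℕ) : ℤ) : ZMod m)) 0
        = (((fwdDiff 1)^[(k : ℕ)] (fun j : ℕ => ((j.choose l : ℕ) : ℤ)) 0 : ℤ) : ZMod m) := by
      exact fwdDiff_iter_comp_hom (Int.castAddHom (ZMod m)) (fun j => ((j.choose l : ℕ) : ℤ)) _ _
    rw [h1, fwdDiff_iter_choose_zero]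
    split <;> simp
  rw [Finset.sum_congr rfl fun l _ => hterm l]
  simp only [Fin.val_eq_val]
  simp [Finset.sum_ite_eq]

end Stmt8Aux

theorem stmt_8 (n m : ℕ) (hn : 1 ≤ n) (hm : 1 ≤ m) (f : ZMod n → ZMod m)
    (hcp : CongPres n m f) (a : Fin n → ZMod m)
    (hf : ∀ x : ZMod n, f x = ∑ k : Fin n, a k * (Nat.choose x.val k : ZMod m)) :
    ∀ k : Fin n, ∀ p : ℕ, 1 ≤ p → p ≤ (k : ℕ) → (p : ZMod m) ∣ a k := by
  intro k p hp1 hpk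
  haveI : NeZero m := ⟨by omega⟩
  set K := (k : ℕ) with hK
  have hKn : K < n := k.isLt
  set ftil : ℕ → ZMod m := fun j => f ((j : ℕ) : ZMod n) with hftil
  have hagree : ∀ i, i ≤ K → ftil i = ∑ l : Fin n, a l * ((i.choose l : ℕ) : ZMod m) := by
    intro i hi
    have hin : i < n := by omega
    simp only [hftil]
    rw [hf ((i : ℕ) : ZMod n), ZMod.val_natCast_of_lt hin]
  have hak : a k = (fwdDiff 1)^[K] ftil 0 := by
    rw [← Stmt8Aux.extract m n a k]
    exact (Stmt8Aux.fwdDiff_iter_congr _ _ K 0 fun i hi => hagree i (by omega)).symm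
  set d := Nat.gcd p m with hd
  have hdval : d ∣ (a k).val := by
    rw [Nat.dvd_iff_prime_pow_dvd_dvd]
    intro q t hqprime hqtd
    have hqp : q ^ t ∣ p := hqtd.trans (Nat.gcd_dvd_left p m)
    have hqm : q ^ t ∣ m := hqtd.trans (Nat.gcd_dvd_right p m)
    have hqtK : q ^ t ≤ K := le_trans (Nat.le_of_dvd (by omega) hqp) hpk
    have hqt1 : 1 ≤ q ^ t := Nat.one_le_pow _ _ hqprime.pos
    set B := K + 1 - q ^ t with hB
    set rep : ℕ → ℕ := fun j => if j ≤ K then j else B + (j - B) % q ^ t with hrep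
    have hrepK : ∀ j, rep j ≤ K := by
      intro j; simp only [hrep]; split
      · assumption
      · have := Nat.mod_lt (j - B) (show 0 < q ^ t by omega); omega
    have hrepid : ∀ j, j ≤ K → rep j = j := fun j hj => by simp [hrep, hj]
    have hrepmod : ∀ j, rep j ≡ j [MOD q ^ t] := by
      intro j; simp only [hrep]; split
      · rfl
      · rename_i hj
        have hBj : B ≤ j := by omega
        calc B + (j - B) % q ^ t ≡ B + (j - B) [MOD q ^ t] :=
              Nat.ModEq.add_left B (Nat.mod_modEq (j - B) (q ^ t))
          _ = j := by omega
    set F : ℕ → ℤ := fun j => (((f ((rep j : ℕ) : ZMod n)).val : ℕ) : ℤ) with hF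
    have hFcp : ∀ t', t' ≤ t → ∀ i j : ℕ, i ≡ j [MOD q ^ (0 + t')] → (q : ℤ) ^ t' ∣ F i - F j := by
      intro t' ht' i j hij
      rw [zero_add] at hij
      have hdvd_tt : (q : ℕ) ^ t' ∣ q ^ t := pow_dvd_pow q ht'
      have hmod : rep i ≡ rep j [MOD q ^ t'] :=
        ((hrepmod i).of_dvd hdvd_tt).trans ((hij.of_dvd (dvd_refl _)).trans
          (((hrepmod j).of_dvd hdvd_tt).symm))
      have hm' : q ^ t' ∣ m := hdvd_tt.trans hqm
      have hcpe := hcp (q ^ t') hm' (rep i) (rep j) (lt_of_le_of_lt (hrepK i) hKn)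
        (lt_of_le_of_lt (hrepK j) hKn) hmod
      rw [ZMod.castHom_apply, ZMod.castHom_apply] at hcpe
      have hv : (((f ((rep i : ℕ) : ZMod n)).val : ℕ) : ZMod (q ^ t'))
          = (((f ((rep j : ℕ) : ZMod n)).val : ℕ) : ZMod (q ^ t')) := by
        rw [ZMod.natCast_val, ZMod.natCast_val, hcpe]
      have hme := (ZMod.natCast_eq_natCast_iff _ _ _).mp hv
      have hint := (Nat.modEq_iff_dvd).mp hme
      have hint' : ((q : ℤ) ^ t') ∣ F j - F i := by
        have : ((q ^ t' : ℕ) : ℤ) = (q : ℤ) ^ t' := by push_cast; ring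
        rw [← this]
        exact hint
      have := hint'.neg_right
      simpa using this
    have hcore := Stmt8Aux.core q hqprime t 0 K (by simpa using hqtK) F hFcp
    set D := (fwdDiff 1)^[K] F 0 with hD
    have hcast : a k = ((D : ℤ) : ZMod m) := by
      rw [hak]
      have h1 : (fwdDiff 1)^[K] (fun j => ((F j : ℤ) : ZMod m)) 0 = ((D : ℤ) : ZMod m) :=
        Stmt8Aux.fwdDiff_iter_comp_hom (Int.castAddHom (ZMod m)) F K 0
      rw [← h1]
      refine Stmt8Aux.fwdDiff_iter_congr _ _ K 0 fun i hi => ?_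
      simp only [hftil, hF, hrepid i (by omega)]
      push_cast
      rw [ZMod.natCast_val, ZMod.cast_id]
    have hmdvd : (m : ℤ) ∣ D - (((a k).val : ℕ) : ℤ) := by
      rw [← ZMod.intCast_zmod_eq_zero_iff_dvd]
      push_cast
      rw [← hcast, ZMod.natCast_val, ZMod.cast_id]
      ring
    have hqt_int : ((q : ℤ) ^ t) ∣ (((a k).val : ℕ) : ℤ) := by
      have hqm' : ((q : ℤ) ^ t) ∣ (m : ℤ) := by
        have : ((q ^ t : ℕ) : ℤ) ∣ ((m : ℕ) : ℤ) := Int.natCast_dvd_natCast.mpr hqm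
        simpa [Int.natCast_pow] using this
      have h1 : ((q : ℤ) ^ t) ∣ D - (((a k).val : ℕ) : ℤ) := hqm'.trans hmdvd
      have h2 := dvd_sub hcore h1
      simpa using h2
    have : ((q ^ t : ℕ) : ℤ) ∣ (((a k).val : ℕ) : ℤ) := by
      simpa [Int.natCast_pow] using hqt_int
    exact_mod_cast this
  obtain ⟨u, hu⟩ := hdval
  have h1 : (d : ZMod m) ∣ a k := by
    refine ⟨(u : ℕ), ?_⟩
    have hval : a k = (((a k).val : ℕ) : ZMod m) := by
      rw [ZMod.natCast_val, ZMod.cast_id]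
    rw [hval, hu]
    push_cast
    ring
  have h2 : (p : ZMod m) ∣ (d : ZMod m) := by
    refine ⟨((Nat.gcdA p m : ℤ) : ZMod m), ?_⟩
    have hb := Nat.gcd_eq_gcd_ab p m
    have : ((d : ℤ) : ZMod m) = (((p : ℤ) * Nat.gcdA p m + (m : ℤ) * Nat.gcdB p m : ℤ) : ZMod m) := by
      rw [← hb]
    push_cast at this
    simpa [ZMod.natCast_self] using this
  exact h2.trans h1
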